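/- arXiv:1102.5682 — 3 statements merged into one kernel-verified Lean document; each statement's English description precedes it below -/
import Mathlib

section
/- Let M = (Q, Σ, δ, q0, F) be a DFA with total transition function over a nonempty finite alphabet Σ, and let q, p ∈ Q. Then d(q, p) = 0 if L_M(q) = L_M(p), and otherwise d(q, p) = 1 + max{d(δ(q, a), δ(p, a)) : a ∈ Σ} (with 1 + ∞ = ∞). -/
/-- The distance `d(L, L')` between two languages: the least `ℓ ∈ ℕ` such that
`L` and `L'` agree on all words of length at least `ℓ` (with `min ∅ = ∞`). -/
noncomputable def langDist {α : Type} (L L' : Set (List α)) : ℕ∞ :=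
  sInf {n : ℕ∞ | ∃ ℓ : ℕ, n = (ℓ : ℕ∞) ∧
    ∀ w : List α, ℓ ≤ w.length → (w ∈ L ↔ w ∈ L')}

/-- The right-language `L_M(q)` of a state `q` of a (total) DFA `M`. -/
def rightLang {α σ : Type} (M : DFA α σ) (q : σ) : Set (List α) :=
  {w | M.evalFrom q w ∈ M.accept}

/-- The distance between two states of a (total) DFA. -/
noncomputable def stateDist {α σ : Type} (M : DFA α σ) (q p : σ) : ℕ∞ :=
  langDist (rightLang M q) (rightLang M p)

lemma langDist_le_iff {α : Type} (L L' : Set (List α)) (ℓ : ℕ) :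
    langDist L L' ≤ (ℓ : ℕ∞) ↔ ∀ w : List α, ℓ ≤ w.length → (w ∈ L ↔ w ∈ L') := by
  constructor
  · intro h
    have h2 : langDist L L' < ((ℓ + 1 : ℕ) : ℕ∞) := by
      refine lt_of_le_of_lt h ?_
      exact_mod_cast Nat.lt_succ_self ℓ
    rw [langDist] at h2
    obtain ⟨n, hn, hlt⟩ := sInf_lt_iff.mp h2
    obtain ⟨m, rfl, hP⟩ := hn
    have hm : m ≤ ℓ := Nat.lt_succ_iff.mp (by exact_mod_cast hlt)
    intro w hw
    exact hP w (le_trans hm hw)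
  · intro h
    exact sInf_le ⟨ℓ, rfl, h⟩

lemma mem_rightLang_cons {α σ : Type} (M : DFA α σ) (q : σ) (a : α) (w : List α) :
    (a :: w) ∈ rightLang M q ↔ w ∈ rightLang M (M.step q a) := Iff.rfl

/-- The recursive formula for the distance between states of a total DFA over a
nonempty finite alphabet: `d(q, p) = 0` if `q ≡ p`, and otherwise
`d(q, p) = 1 + max {d(δ(q, a), δ(p, a)) : a ∈ Σ}`. -/
theorem stateDist_recursion {α σ : Type} [Fintype α] [Nonempty α]
    (M : DFA α σ) (q p : σ) :
    (rightLang M q = rightLang M p → stateDist M q p = 0) ∧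
    (rightLang M q ≠ rightLang M p →
      stateDist M q p = 1 + ⨆ a : α, stateDist M (M.step q a) (M.step p a)) := by
  constructor
  · intro h
    have h0 : stateDist M q p ≤ (0 : ℕ) := by
      rw [stateDist, langDist_le_iff]
      intro w _
      rw [h]
    simpa using h0
  · intro hne
    apply le_antisymm
    · -- d ≤ 1 + S
      set S := ⨆ a : α, stateDist M (M.step q a) (M.step p a) with hS
      rcases eq_or_ne S ⊤ with hT | hT
      · simp [hT]
      · obtain ⟨N, hN⟩ := WithTop.ne_top_iff_exists.mp hT
        have hall : ∀ a : α, ∀ w : List α, N ≤ w.length →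
            (w ∈ rightLang M (M.step q a) ↔ w ∈ rightLang M (M.step p a)) := by
          intro a
          rw [← langDist_le_iff]
          exact le_trans (le_iSup (fun a => stateDist M (M.step q a) (M.step p a)) a) hN.ge
        have hle : stateDist M q p ≤ ((N + 1 : ℕ) : ℕ∞) := by
          rw [stateDist, langDist_le_iff]
          intro w hw
          match w with
          | [] => simp at hw
          | a :: w' =>
            rw [mem_rightLang_cons, mem_rightLang_cons]
            exact hall a w' (by simpa using hw)
        calc stateDist M q p ≤ ((N + 1 : ℕ) : ℕ∞) := hle
          _ = 1 + S := by rw [← hN]; push_cast; rw [add_comm]; rfl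
    · -- 1 + S ≤ d
      rcases eq_or_ne (stateDist M q p) ⊤ with hT | hT
      · simp [hT]
      · obtain ⟨m, hm⟩ := WithTop.ne_top_iff_exists.mp hT
        have hP : ∀ w : List α, m ≤ w.length →
            (w ∈ rightLang M q ↔ w ∈ rightLang M p) :=
          (langDist_le_iff _ _ m).mp (le_of_eq hm.symm)
        have hm1 : m ≠ 0 := by
          rintro rfl
          exact hne (Set.ext fun w => hP w (Nat.zero_le _))
        obtain ⟨k, rfl⟩ := Nat.exists_eq_succ_of_ne_zero hm1
        have hSle : (⨆ a : α, stateDist M (M.step q a) (M.step p a)) ≤ (k : ℕ∞) := by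
          apply iSup_le
          intro a
          rw [stateDist, langDist_le_iff]
          intro w hw
          have := hP (a :: w) (by simpa using Nat.succ_le_succ hw)
          simpa [mem_rightLang_cons] using this
        calc 1 + (⨆ a : α, stateDist M (M.step q a) (M.step p a))
            ≤ 1 + (k : ℕ∞) := by exact add_le_add_right hSle 1
          _ = stateDist M q p := by rw [← hm, Nat.succ_eq_add_one]; push_cast; ring_nf; rfl
end

section
/- Let G = (V, E) be a finite undirected graph, with a fixed linear order < on V, in which every vertex is incident to at least one edge, let M be the DFA constructed from G as described, and let c : V → {1,2,3} be a proper 3-colouring of G. Then the DFA c(M) constructed from c as described has exactly 14 states and satisfies |L(M) △ L(c(M))| = |E| · (|V| − 2). -/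
/-- The alphabet `Σ = {a, b} ∪ V ∪ E` of the DFA constructed from the graph
`G = (V, E)` (edges are represented as ordered pairs `(v₁, v₂)` with `v₁ < v₂`). -/
inductive Al (V : Type) (E : Finset (V × V)) : Type where
  | a : Al V E
  | b : Al V E
  | vert : V → Al V E
  | edge : {p : V × V // p ∈ E} → Al V E

/-- The state set `Q = {⊤, ⊥, ∞, ☺, ☹} ∪ V ∪ {☺_j, ◐_j, ☹_j : j ∈ {1,2,3}}`
(the index `j ∈ {1,2,3}` is represented by `Fin 3`, with `0, 1, 2` standing
for `1, 2, 3`). -/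
inductive St (V : Type) : Type where
  | top : St V          -- ⊤
  | bot : St V          -- ⊥
  | inf : St V          -- ∞
  | smile : St V        -- ☺
  | frown : St V        -- ☹
  | vert : V → St V
  | smileJ : Fin 3 → St V   -- ☺_j
  | halfJ : Fin 3 → St V    -- ◐_j
  | frownJ : Fin 3 → St V   -- ☹_j
  deriving DecidableEq

/-- The transition function `δ` of the DFA `M` constructed from the graph. -/
def Mstep {V : Type} [DecidableEq V] {E : Finset (V × V)} : St V → Al V E → St V
  | .top, .vert v => .vert v
  | .inf, .a => .smileJ 0
  | .inf, .b => .frownJ 0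
  | .vert v, .edge e =>
      if v = e.val.1 then .smileJ 0
      else if v = e.val.2 then .frownJ 0
      else .halfJ 0
  | .halfJ j, .a => if j = 0 then .halfJ 1 else if j = 1 then .halfJ 2 else .smile
  | .halfJ j, .b => if j = 2 then .frown else .bot
  | .smileJ j, .a => if j = 0 then .smileJ 1 else if j = 1 then .smileJ 2 else .smile
  | .smileJ j, .b => if j = 2 then .smile else .bot
  | .frownJ j, .a => if j = 0 then .frownJ 1 else if j = 1 then .frownJ 2 else .frown
  | .frownJ j, .b => if j = 2 then .frown else .bot
  | .smile, .b => .inf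
  | .frown, .b => .inf
  | _, _ => .bot

/-- The total DFA `M` constructed from the graph `G = (V, E)`, with start state `⊤`
and accepting states `F = {∞, ☺}`. -/
def MD (V : Type) [DecidableEq V] (E : Finset (V × V)) : DFA (Al V E) (St V) where
  step := Mstep
  start := .top
  accept := {.inf, .smile}

/-- The state set `P = {⊤, ⊥, ∞, ☺, ☹} ∪ {1, 2, 3} ∪ {☺_j, ☹_j : j ∈ {1,2,3}}`
of the DFA `c(M)` (colours and the index `j` are represented by `Fin 3`). -/
inductive StC (V : Type) : Type where
  | top : StC V          -- ⊤
  | bot : StC V          -- ⊥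
  | inf : StC V          -- ∞
  | smile : StC V        -- ☺
  | frown : StC V        -- ☹
  | col : Fin 3 → StC V      -- colours 1, 2, 3
  | smileJ : Fin 3 → StC V   -- ☺_j
  | frownJ : Fin 3 → StC V   -- ☹_j
  deriving DecidableEq, Fintype

/-- The transition function `μ` of the DFA `c(M)` obtained from a proper
3-colouring `c` of the graph. -/
def cMstep {V : Type} [DecidableEq V] {E : Finset (V × V)} (c : V → Fin 3) :
    StC V → Al V E → StC V
  | .top, .vert v => .col (c v)
  | .col i, .edge e => if c e.val.2 = i then .frownJ 0 else .smileJ 0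
  | .inf, .a => .smileJ 0
  | .inf, .b => .frownJ 0
  | .smileJ j, .a => if j = 0 then .smileJ 1 else if j = 1 then .smileJ 2 else .smile
  | .smileJ j, .b => if j = 2 then .smile else .bot
  | .frownJ j, .a => if j = 0 then .frownJ 1 else if j = 1 then .frownJ 2 else .frown
  | .frownJ j, .b => if j = 2 then .frown else .bot
  | .smile, .b => .inf
  | .frown, .b => .inf
  | _, _ => .bot

/-- The DFA `c(M)` obtained from the proper 3-colouring `c`. -/
def cMD (V : Type) [DecidableEq V] (E : Finset (V × V)) (c : V → Fin 3) :
    DFA (Al V E) (StC V) where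
  step := cMstep c
  start := .top
  accept := {.inf, .smile}


section
variable {V : Type} [DecidableEq V] {E : Finset (V × V)} (c : V → Fin 3)

/-- map good M-states to c(M)-states -/
def stF : St V → StC V
  | .bot => .bot
  | .inf => .inf
  | .smile => .smile
  | .frown => .frown
  | .smileJ j => .smileJ j
  | .frownJ j => .frownJ j
  | _ => .bot

def stGood : St V → Prop
  | .top => False
  | .vert _ => False
  | .halfJ _ => False
  | _ => True

def AccM : St V → Prop := fun p => p = .inf ∨ p = .smile
def AccC : StC V → Prop := fun q => q = .inf ∨ q = .smile

lemma stGood_step (p : St V) (hp : stGood p) (σ : Al V E) :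
    stGood (Mstep p σ) ∧ cMstep c (stF p) σ = stF (Mstep p σ) := by
  cases p <;> cases σ <;>
    simp_all [stGood, stF, Mstep, cMstep] <;>
    rename_i j <;> fin_cases j <;> simp [Mstep, cMstep, stF, stGood]

lemma stGood_acc (p : St V) (hp : stGood p) : (AccM p ↔ AccC (stF p)) := by
  cases p <;> simp_all [stGood, stF, AccM, AccC]

lemma sync : ∀ (w : List (Al V E)) (p : St V), stGood p →
    (AccM (w.foldl Mstep p) ↔ AccC (w.foldl (cMstep c) (stF p))) := by
  intro w
  induction w with
  | nil => exact fun p hp => stGood_acc p hp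
  | cons σ t ih =>
    intro p hp
    obtain ⟨h1, h2⟩ := stGood_step c p hp σ
    simpa [h2] using ih (Mstep p σ) h1

def Dif (p : St V) (q : StC V) (t : List (Al V E)) : Prop :=
  ¬ (AccM (t.foldl Mstep p) ↔ AccC (t.foldl (cMstep c) q))

lemma dif_sync (p : St V) (hp : stGood p) (t : List (Al V E)) : ¬ Dif c p (stF p) t :=
  fun h => h (sync c t p hp)

lemma dif_fs (t : List (Al V E)) : Dif c .frown .smile t ↔ t = [] := by
  cases t with
  | nil => simp [Dif, AccM, AccC]
  | cons σ t =>
    simp only [List.cons_ne_nil, iff_false]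
    cases σ
    · exact dif_sync c .bot trivial t
    · exact dif_sync c .inf trivial t
    · exact dif_sync c .bot trivial t
    · exact dif_sync c .bot trivial t

lemma dif_sf (t : List (Al V E)) : Dif c .smile .frown t ↔ t = [] := by
  cases t with
  | nil => simp [Dif, AccM, AccC]
  | cons σ t =>
    simp only [List.cons_ne_nil, iff_false]
    cases σ
    · exact dif_sync c .bot trivial t
    · exact dif_sync c .inf trivial t
    · exact dif_sync c .bot trivial t
    · exact dif_sync c .bot trivial t

end
set_option linter.unusedSectionVars false

section
variable {V : Type} [DecidableEq V] {E : Finset (V × V)} (c : V → Fin 3)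

lemma dif_cons (p : St V) (q : StC V) (σ : Al V E) (t : List (Al V E)) :
    Dif c p q (σ :: t) ↔ Dif c (Mstep p σ) (cMstep c q σ) t := Iff.rfl

lemma dif_h2s (t : List (Al V E)) : Dif c (.halfJ 2) (.smileJ 2) t ↔ t = [.b] := by
  cases t with
  | nil => simp [Dif, AccM, AccC]
  | cons σ t =>
    cases σ
    · exact iff_of_false (dif_sync c .smile trivial t) (by simp)
    · exact (dif_fs c t).trans (by simp)
    · exact iff_of_false (dif_sync c .bot trivial t) (by simp)
    · exact iff_of_false (dif_sync c .bot trivial t) (by simp)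

lemma dif_h1s (t : List (Al V E)) : Dif c (.halfJ 1) (.smileJ 1) t ↔ t = [.a, .b] := by
  cases t with
  | nil => simp [Dif, AccM, AccC]
  | cons σ t =>
    cases σ
    · exact (dif_h2s c t).trans (by simp)
    · exact iff_of_false (dif_sync c .bot trivial t) (by simp)
    · exact iff_of_false (dif_sync c .bot trivial t) (by simp)
    · exact iff_of_false (dif_sync c .bot trivial t) (by simp)

lemma dif_h0s (t : List (Al V E)) : Dif c (.halfJ 0) (.smileJ 0) t ↔ t = [.a, .a, .b] := by
  cases t with
  | nil => simp [Dif, AccM, AccC]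
  | cons σ t =>
    cases σ
    · exact (dif_h1s c t).trans (by simp)
    · exact iff_of_false (dif_sync c .bot trivial t) (by simp)
    · exact iff_of_false (dif_sync c .bot trivial t) (by simp)
    · exact iff_of_false (dif_sync c .bot trivial t) (by simp)

lemma dif_h2f (t : List (Al V E)) : Dif c (.halfJ 2) (.frownJ 2) t ↔ t = [.a] := by
  cases t with
  | nil => simp [Dif, AccM, AccC]
  | cons σ t =>
    cases σ
    · exact (dif_sf c t).trans (by simp)
    · exact iff_of_false (dif_sync c .frown trivial t) (by simp)
    · exact iff_of_false (dif_sync c .bot trivial t) (by simp)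
    · exact iff_of_false (dif_sync c .bot trivial t) (by simp)

lemma dif_h1f (t : List (Al V E)) : Dif c (.halfJ 1) (.frownJ 1) t ↔ t = [.a, .a] := by
  cases t with
  | nil => simp [Dif, AccM, AccC]
  | cons σ t =>
    cases σ
    · exact (dif_h2f c t).trans (by simp)
    · exact iff_of_false (dif_sync c .bot trivial t) (by simp)
    · exact iff_of_false (dif_sync c .bot trivial t) (by simp)
    · exact iff_of_false (dif_sync c .bot trivial t) (by simp)

lemma dif_h0f (t : List (Al V E)) : Dif c (.halfJ 0) (.frownJ 0) t ↔ t = [.a, .a, .a] := by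
  cases t with
  | nil => simp [Dif, AccM, AccC]
  | cons σ t =>
    cases σ
    · exact (dif_h1f c t).trans (by simp)
    · exact iff_of_false (dif_sync c .bot trivial t) (by simp)
    · exact iff_of_false (dif_sync c .bot trivial t) (by simp)
    · exact iff_of_false (dif_sync c .bot trivial t) (by simp)

end
set_option linter.unusedSectionVars false
section
variable {V : Type} [DecidableEq V] {E : Finset (V × V)} (c : V → Fin 3)

lemma dif_vert (hc : ∀ e ∈ E, c e.1 ≠ c e.2) (v : V) (t : List (Al V E)) :
    Dif c (.vert v) (.col (c v)) t ↔
      ∃ e : {p : V × V // p ∈ E}, v ≠ e.val.1 ∧ v ≠ e.val.2 ∧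
        t = [.edge e, .a, .a, if c e.val.2 = c v then .a else .b] := by
  cases t with
  | nil => exact iff_of_false (by simp [Dif, AccM, AccC]) (by simp)
  | cons σ t =>
    cases σ with
    | a => exact iff_of_false (dif_sync c .bot trivial t) (by simp)
    | b => exact iff_of_false (dif_sync c .bot trivial t) (by simp)
    | vert v' => exact iff_of_false (dif_sync c .bot trivial t) (by simp)
    | edge e =>
      rw [dif_cons]
      have hMe : (Mstep (.vert v) (.edge e) : St V) =
          if v = e.val.1 then .smileJ 0 else if v = e.val.2 then .frownJ 0 else .halfJ 0 := rfl
      have hCe : (cMstep c (.col (c v)) (.edge e) : StC V) =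
          if c e.val.2 = c v then .frownJ 0 else .smileJ 0 := rfl
      rw [hMe, hCe]
      by_cases hv1 : v = e.val.1
      · have h2 : c e.val.2 ≠ c v := fun h => hc e.val e.prop (by rw [← hv1, h])
        rw [if_pos hv1, if_neg h2]
        exact iff_of_false (dif_sync c (.smileJ 0) trivial t)
          (by rintro ⟨e', he1, he2, heq⟩
              simp only [List.cons.injEq, Al.edge.injEq] at heq
              exact he1 (heq.1 ▸ hv1))
      · by_cases hv2 : v = e.val.2
        · have h2 : c e.val.2 = c v := by rw [← hv2]
          rw [if_neg hv1, if_pos hv2, if_pos h2]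
          exact iff_of_false (dif_sync c (.frownJ 0) trivial t)
            (by rintro ⟨e', he1, he2, heq⟩
                simp only [List.cons.injEq, Al.edge.injEq] at heq
                exact he2 (heq.1 ▸ hv2))
        · rw [if_neg hv1, if_neg hv2]
          by_cases h2 : c e.val.2 = c v
          · rw [if_pos h2, dif_h0f]
            constructor
            · rintro rfl; exact ⟨e, hv1, hv2, by simp [h2]⟩
            · rintro ⟨e', he1, he2, heq⟩
              simp only [List.cons.injEq, Al.edge.injEq] at heq
              obtain ⟨rfl, h⟩ := heq
              simpa [h2] using h
          · rw [if_neg h2, dif_h0s]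
            constructor
            · rintro rfl; exact ⟨e, hv1, hv2, by simp [h2]⟩
            · rintro ⟨e', he1, he2, heq⟩
              simp only [List.cons.injEq, Al.edge.injEq] at heq
              obtain ⟨rfl, h⟩ := heq
              simpa [h2] using h

lemma dif_top (hc : ∀ e ∈ E, c e.1 ≠ c e.2) (w : List (Al V E)) :
    Dif c .top .top w ↔
      ∃ e : {p : V × V // p ∈ E}, ∃ v : V, v ≠ e.val.1 ∧ v ≠ e.val.2 ∧
        w = [.vert v, .edge e, .a, .a, if c e.val.2 = c v then .a else .b] := by
  cases w with
  | nil => exact iff_of_false (by simp [Dif, AccM, AccC]) (by simp)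
  | cons σ t =>
    cases σ with
    | a => exact iff_of_false (dif_sync c .bot trivial t) (by simp)
    | b => exact iff_of_false (dif_sync c .bot trivial t) (by simp)
    | edge e => exact iff_of_false (dif_sync c .bot trivial t) (by simp)
    | vert v =>
      rw [dif_cons]
      have h1 : (Mstep (E := E) .top (.vert v)) = .vert v := rfl
      have h2 : (cMstep (E := E) c .top (.vert v)) = .col (c v) := rfl
      rw [h1, h2, dif_vert c hc]
      constructor
      · rintro ⟨e, h1, h2, rfl⟩; exact ⟨e, v, h1, h2, rfl⟩
      · rintro ⟨e, v', h1, h2, heq⟩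
        simp only [List.cons.injEq, Al.vert.injEq] at heq
        obtain ⟨rfl, h⟩ := heq
        exact ⟨e, h1, h2, h⟩
end

/-- If `c` is a proper 3-colouring of `G`, then `c(M)` has exactly 14 states and
commits exactly `|E|·(|V|−2)` errors with respect to `M`. -/
theorem colouring_dfa_card_and_errors
    {V : Type} [Fintype V] [LinearOrder V] (E : Finset (V × V))
    (hord : ∀ e ∈ E, e.1 < e.2)
    (hinc : ∀ v : V, ∃ e ∈ E, v = e.1 ∨ v = e.2)
    (c : V → Fin 3) (hc : ∀ e ∈ E, c e.1 ≠ c e.2) :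
    Fintype.card (StC V) = 14 ∧
    (symmDiff ((MD V E).accepts : Set (List (Al V E)))
        ((cMD V E c).accepts : Set (List (Al V E)))).encard
      = ((E.card * (Fintype.card V - 2) : ℕ) : ℕ∞) := by
  classical
  refine ⟨rfl, ?_⟩
  set g : {p : V × V // p ∈ E} × V → List (Al V E) :=
    fun x => [.vert x.2, .edge x.1, .a, .a, if c x.1.val.2 = c x.2 then .a else .b] with hg
  have hginj : Function.Injective g := by
    rintro ⟨e, v⟩ ⟨e', v'⟩ h
    simp only [hg, List.cons.injEq, Al.vert.injEq, Al.edge.injEq] at h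
    exact Prod.ext h.2.1 h.1
  set T : Finset ({p : V × V // p ∈ E} × V) :=
    Finset.univ.filter (fun x => x.2 ≠ x.1.val.1 ∧ x.2 ≠ x.1.val.2) with hT
  have hset : symmDiff ((MD V E).accepts : Set (List (Al V E)))
      ((cMD V E c).accepts : Set (List (Al V E))) = ((T.image g : Finset (List (Al V E))) : Set (List (Al V E))) := by
    ext w
    have h1 : (w ∈ (MD V E).accepts ↔ AccM (w.foldl Mstep .top)) := by
      simp [DFA.mem_accepts, MD, DFA.eval, DFA.evalFrom, AccM]
    have h2 : (w ∈ (cMD V E c).accepts ↔ AccC (w.foldl (cMstep c) .top)) := by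
      simp [DFA.mem_accepts, cMD, DFA.eval, DFA.evalFrom, AccC]
    have hd : w ∈ symmDiff ((MD V E).accepts : Set (List (Al V E)))
        ((cMD V E c).accepts : Set (List (Al V E))) ↔ Dif c .top .top w := by
      change (w ∈ (MD V E).accepts ∧ w ∉ (cMD V E c).accepts) ∨ (w ∈ (cMD V E c).accepts ∧ w ∉ (MD V E).accepts) ↔ _
      rw [Dif, ← h1, ← h2]; tauto
    rw [hd, dif_top c hc w]
    simp only [Finset.coe_image, Set.mem_image, Finset.mem_coe]
    constructor
    · rintro ⟨e, v, hv1, hv2, rfl⟩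
      exact ⟨⟨e, v⟩, Finset.mem_coe.2 (by rw [hT, Finset.mem_filter]; exact ⟨Finset.mem_univ _, hv1, hv2⟩), rfl⟩
    · rintro ⟨⟨e, v⟩, hm, rfl⟩
      rw [Finset.mem_coe, hT, Finset.mem_filter] at hm
      exact ⟨e, v, hm.2.1, hm.2.2, rfl⟩
  rw [hset, Set.encard_coe_eq_coe_finsetCard, Finset.card_image_of_injective _ hginj]
  norm_cast
  have hTeq : T = E.attach.biUnion (fun e =>
      (Finset.univ.filter fun v => v ≠ e.val.1 ∧ v ≠ e.val.2).image fun v => (e, v)) := by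
    ext x
    obtain ⟨e, v⟩ := x
    rw [hT, Finset.mem_filter, Finset.mem_biUnion]
    constructor
    · rintro ⟨-, h1, h2⟩
      exact ⟨e, Finset.mem_attach _ _,
        Finset.mem_image.2 ⟨v, Finset.mem_filter.2 ⟨Finset.mem_univ _, h1, h2⟩, rfl⟩⟩
    · rintro ⟨e', -, hm⟩
      obtain ⟨v', hv', heq⟩ := Finset.mem_image.1 hm
      rw [Prod.mk.injEq] at heq
      obtain ⟨rfl, rfl⟩ := heq
      exact ⟨Finset.mem_univ _, (Finset.mem_filter.1 hv').2⟩
  rw [hTeq, Finset.card_biUnion]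
  · have hcardfib : ∀ e : {p : V × V // p ∈ E},
        ((Finset.univ.filter fun v => v ≠ e.val.1 ∧ v ≠ e.val.2).image fun v => (e, v)).card
          = Fintype.card V - 2 := by
      intro e
      rw [Finset.card_image_of_injective _ (fun a b h => (Prod.mk.injEq _ _ _ _ ▸ h).2)]
      have : (Finset.univ.filter fun v => v ≠ e.val.1 ∧ v ≠ e.val.2)
          = (Finset.univ.erase e.val.1).erase e.val.2 := by
        ext v; simp [Finset.mem_erase]; tauto
      rw [this, Finset.card_erase_of_mem
          (Finset.mem_erase.2 ⟨(hord e.val e.prop).ne', Finset.mem_univ _⟩),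
        Finset.card_erase_of_mem (Finset.mem_univ _), Finset.card_univ, Nat.sub_sub]
    rw [Finset.sum_congr rfl (fun e _ => hcardfib e), Finset.sum_const, Finset.card_attach,
      smul_eq_mul]
  · intro e _ e' _ hne
    rw [Function.onFun, Finset.disjoint_left]
    rintro ⟨a, b⟩ ha hb
    simp only [Finset.mem_image, Finset.mem_filter, Prod.mk.injEq] at ha hb
    obtain ⟨_, _, rfl, _⟩ := ha
    obtain ⟨_, _, h, _⟩ := hb
    exact hne (h ▸ rfl)
end

section
/- Let G = (V, E) be a finite undirected graph, with a fixed linear order < on V, in which every vertex is incident to at least one edge, and let M be the DFA constructed from G as described. Then every DFA N with at most 14 states such that L(M) △ L(N) is finite satisfies |L(M) △ L(N)| ≥ |E| · (|V| − 2). -/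
namespace ErrorsLB

variable {V : Type} [DecidableEq V] {E : Finset (V × V)}

/-- Acceptance of a state of `M`, as a Boolean. -/
def accB : St V → Bool
  | .inf => true
  | .smile => true
  | _ => false

lemma mem_accept_iff (s : St V) : s ∈ (MD V E).accept ↔ accB s = true := by
  cases s <;> simp [MD, accB]

lemma lang_mem_symmDiff {α : Type*} {A B : Language α} {x : List α} :
    x ∈ symmDiff A B ↔ (x ∈ A ∧ x ∉ B) ∨ (x ∈ B ∧ x ∉ A) := Set.mem_symmDiff

lemma evF_app {α σ : Type*} (N : DFA α σ) (s : σ) (x y : List α) :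
    N.evalFrom s (x ++ y) = N.evalFrom (N.evalFrom s x) y := by
  simp [DFA.evalFrom, List.foldl_append]

lemma eval_app {α σ : Type*} (N : DFA α σ) (x y : List α) :
    N.eval (x ++ y) = N.evalFrom (N.eval x) y := by
  simp [DFA.eval, DFA.evalFrom, List.foldl_append]

/-- Access words from `◐₁` to the 13 kernel states. -/
def uw : Fin 13 → List (Al V E) :=
  ![[], [.a], [.a,.a], [.a,.a,.a], [.a,.a,.b], [.a,.a,.a,.b],
    [.a,.a,.a,.b,.a], [.a,.a,.a,.b,.a,.a], [.a,.a,.a,.b,.a,.a,.a],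
    [.a,.a,.a,.b,.b], [.a,.a,.a,.b,.b,.a], [.a,.a,.a,.b,.b,.a,.a], [.b]]

/-- The 13 kernel states reachable from `◐₁`. -/
def ks : Fin 13 → St V :=
  ![.halfJ 0, .halfJ 1, .halfJ 2, .smile, .frown, .inf,
    .smileJ 0, .smileJ 1, .smileJ 2, .frownJ 0, .frownJ 1, .frownJ 2, .bot]

/-- Probe words distinguishing the 13 kernel states. -/
def probe : Fin 8 → List (Al V E) :=
  ![[], [.a], [.a,.a], [.b], [.a,.b], [.a,.a,.b], [.a,.a,.a], [.a,.a,.a,.b]]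

/-- Acceptance table: `bsig i p` is whether `M` accepts `probe p` from state `ks i`. -/
def bsig : Fin 13 → Fin 8 → Bool :=
  ![![false,false,false,false,false,false,true ,true ],
    ![false,false,true ,false,false,true ,false,false],
    ![false,true ,false,false,true ,false,false,false],
    ![true ,false,false,true ,false,false,false,false],
    ![false,false,false,true ,false,false,false,false],
    ![true ,false,false,false,false,false,false,true ],
    ![false,false,false,false,false,true ,true ,true ],
    ![false,false,true ,false,true ,true ,false,false],
    ![false,true ,false,true ,true ,false,false,false],
    ![false,false,false,false,false,false,false,true ],
    ![false,false,false,false,false,true ,false,false],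
    ![false,false,false,false,true ,false,false,false],
    ![false,false,false,false,false,false,false,false]]

lemma uw_ks (i : Fin 13) : (MD V E).evalFrom (.halfJ 0) (uw i) = ks i := by
  fin_cases i <;> rfl

lemma ks_probe (i : Fin 13) (p : Fin 8) :
    accB ((MD V E).evalFrom (ks i) (probe p)) = bsig i p := by
  fin_cases i <;> fin_cases p <;> rfl

lemma bsig_inj : ∀ i j : Fin 13, (∀ p, bsig i p = bsig j p) → i = j := by decide

lemma step_bot (c : Al V E) : Mstep St.bot c = St.bot := by cases c <;> rfl

lemma evalFrom_bot (x : List (Al V E)) : (MD V E).evalFrom .bot x = .bot := by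
  induction x with
  | nil => rfl
  | cons c x ih =>
      have h : (MD V E).evalFrom .bot (c :: x) = (MD V E).evalFrom (Mstep .bot c) x := rfl
      rw [h, step_bot]; exact ih

lemma ks_vert (i : Fin 13) (u : V) : Mstep (E := E) (ks i) (.vert u) = .bot := by
  fin_cases i <;> rfl

lemma ks_edge (i : Fin 13) (f : {p : V × V // p ∈ E}) :
    Mstep (E := E) (ks i) (.edge f) = .bot := by
  fin_cases i <;> rfl

lemma bot_not_accept : St.bot ∉ (MD V E).accept := by simp [MD]

lemma kernel_vert (i : Fin 13) (u : V) (x : List (Al V E)) :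
    (MD V E).evalFrom (ks i) (.vert u :: x) ∉ (MD V E).accept := by
  have h : (MD V E).evalFrom (ks i) (.vert u :: x)
      = (MD V E).evalFrom (Mstep (ks i) (.vert u)) x := rfl
  rw [h, ks_vert, evalFrom_bot]; exact bot_not_accept

lemma kernel_edge (i : Fin 13) (f : {p : V × V // p ∈ E}) (x : List (Al V E)) :
    (MD V E).evalFrom (ks i) (.edge f :: x) ∉ (MD V E).accept := by
  have h : (MD V E).evalFrom (ks i) (.edge f :: x)
      = (MD V E).evalFrom (Mstep (ks i) (.edge f)) x := rfl
  rw [h, ks_edge, evalFrom_bot]; exact bot_not_accept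

/-- `k` pumping blocks `(b a a a a)^k`. -/
def blocks : ℕ → List (Al V E)
  | 0 => []
  | k+1 => [.b, .a, .a, .a, .a] ++ blocks k

lemma blocks_len (k : ℕ) : (blocks (V := V) (E := E) k).length = 5 * k := by
  induction k with
  | zero => rfl
  | succ k ih => simp [blocks, ih]; omega

lemma smile_blocks (k : ℕ) : (MD V E).evalFrom .smile (blocks k) = .smile := by
  induction k with
  | zero => rfl
  | succ k ih =>
      have h : blocks (V := V) (E := E) (k+1) = [.b, .a, .a, .a, .a] ++ blocks k := rfl
      rw [h, evF_app]
      exact ih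

/-- The prefix `v e`. -/
def pre (v : V) (f : {p : V × V // p ∈ E}) : List (Al V E) := [.vert v, .edge f]

/-- The witness words `v e a a a (b a a a a)^k`, all in `L(M)` when `v ∉ e`. -/
def wD (v : V) (f : {p : V × V // p ∈ E}) (k : ℕ) : List (Al V E) :=
  pre v f ++ ([.a, .a, .a] ++ blocks k)

lemma wD_len (v : V) (f : {p : V × V // p ∈ E}) (k : ℕ) :
    (wD v f k).length = 5 + 5 * k := by
  simp [wD, pre, blocks_len]
  omega

section Cone

variable {τ : Type} [Fintype τ] (N : DFA (Al V E) τ)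

/-- The main lemma: if `N` has at most 14 states and finite error, then for every
edge `f` and vertex `v` not incident to `f`, `N` errs on some word with prefix `v f`. -/
lemma cone_error (hcard : Fintype.card τ ≤ 14)
    (hfin : (symmDiff ((MD V E).accepts : Set (List (Al V E)))
              (N.accepts : Set (List (Al V E)))).Finite)
    (f : {p : V × V // p ∈ E}) (v : V) (hv1 : v ≠ f.val.1) (hv2 : v ≠ f.val.2) :
    ∃ r, (pre v f ++ r) ∈ symmDiff ((MD V E).accepts : Set (List (Al V E)))
              (N.accepts : Set (List (Al V E))) := by
  classical
  by_contra hno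
  push_neg at hno
  have hcone : ∀ r, ((pre v f ++ r) ∈ (MD V E).accepts ↔ (pre v f ++ r) ∈ N.accepts) := by
    intro r
    have h := hno r
    rw [lang_mem_symmDiff] at h
    push_neg at h
    exact ⟨h.1, h.2⟩
  have hpre : (MD V E).eval (pre v f) = St.halfJ 0 := by
    show Mstep (E := E) (Mstep (E := E) .top (.vert v)) (.edge f) = St.halfJ 0
    simp [Mstep, hv1, hv2]
  -- residual correctness at q0 := N.eval (pre v f)
  have key : ∀ r, ((MD V E).evalFrom (St.halfJ 0) r ∈ (MD V E).accept ↔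
      N.evalFrom (N.eval (pre v f)) r ∈ N.accept) := by
    intro r
    have h := hcone r
    rw [DFA.mem_accepts, DFA.mem_accepts, eval_app, eval_app, hpre] at h
    exact h
  -- M accepts every wD k
  have hMW : ∀ k, wD v f k ∈ (MD V E).accepts := by
    intro k
    rw [show wD v f k = pre v f ++ ([Al.a, Al.a, Al.a] ++ blocks k) from rfl,
      DFA.mem_accepts, eval_app, hpre]
    rw [evF_app,
      show (MD V E).evalFrom (St.halfJ 0) [Al.a, Al.a, Al.a] = St.smile from rfl,
      smile_blocks]
    simp [MD]
  have hWinj : Function.Injective (wD v f) := by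
    intro k k' h
    have := congrArg List.length h
    rw [wD_len, wD_len] at this
    omega
  have infct : ∀ (g : ℕ → List (Al V E)),
      Function.Injective g →
      (∀ k, g k ∈ symmDiff ((MD V E).accepts : Set (List (Al V E)))
              (N.accepts : Set (List (Al V E)))) → False := by
    intro g hg hm
    exact hfin.not_infinite (Set.infinite_of_injective_forall_mem hg hm)
  -- the three clash lemmas
  have hK1 : ∀ i : Fin 13, N.evalFrom (N.eval (pre v f)) (uw i) = N.start → False := by
    intro i hi
    apply infct (wD v f) hWinj
    intro k
    rw [lang_mem_symmDiff]
    left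
    refine ⟨hMW k, ?_⟩
    intro hNk
    rw [DFA.mem_accepts] at hNk
    have h1 : N.eval (wD v f k) = N.evalFrom (N.eval (pre v f)) (uw i ++ wD v f k) := by
      rw [evF_app, hi]; rfl
    rw [h1] at hNk
    have h2 := (key (uw i ++ wD v f k)).2 hNk
    rw [evF_app, uw_ks] at h2
    exact kernel_vert i v (Al.edge f :: ([Al.a, Al.a, Al.a] ++ blocks k)) h2
  have hK2 : ∀ i : Fin 13, N.evalFrom (N.eval (pre v f)) (uw i) = N.eval [Al.vert v] → False := by
    intro i hi
    apply infct (wD v f) hWinj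
    intro k
    rw [lang_mem_symmDiff]
    left
    refine ⟨hMW k, ?_⟩
    intro hNk
    rw [DFA.mem_accepts] at hNk
    have h0 : N.eval (wD v f k) =
        N.evalFrom (N.eval [Al.vert v]) (Al.edge f :: ([Al.a, Al.a, Al.a] ++ blocks k)) := by
      rw [show wD v f k = [Al.vert v] ++ (Al.edge f :: ([Al.a, Al.a, Al.a] ++ blocks k)) from rfl,
        eval_app]
    have h1 : N.eval (wD v f k) =
        N.evalFrom (N.eval (pre v f)) (uw i ++ (Al.edge f :: ([Al.a, Al.a, Al.a] ++ blocks k))) := by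
      rw [evF_app, hi, h0]
    rw [h1] at hNk
    have h2 := (key _).2 hNk
    rw [evF_app, uw_ks] at h2
    exact kernel_edge i f ([Al.a, Al.a, Al.a] ++ blocks k) h2
  have hK3 : N.start = N.eval [Al.vert v] → False := by
    intro hi
    -- M rejects .vert v :: wD v f k
    have hMrej : ∀ k, (Al.vert v :: wD v f k) ∉ (MD V E).accepts := by
      intro k hk
      rw [DFA.mem_accepts] at hk
      have h0 : (MD V E).eval (Al.vert v :: wD v f k)
          = (MD V E).evalFrom (Mstep (E := E) (Mstep (E := E) .top (.vert v)) (.vert v))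
              (Al.edge f :: ([Al.a, Al.a, Al.a] ++ blocks k)) := rfl
      rw [h0, show Mstep (E := E) (Mstep (E := E) .top (.vert v)) (.vert v) = St.bot from rfl,
        evalFrom_bot] at hk
      exact bot_not_accept hk
    have hsame : ∀ k, ((Al.vert v :: wD v f k) ∈ N.accepts ↔ wD v f k ∈ N.accepts) := by
      intro k
      rw [DFA.mem_accepts, DFA.mem_accepts]
      have h0 : N.eval (Al.vert v :: wD v f k) = N.evalFrom (N.eval [Al.vert v]) (wD v f k) := by
        rw [show (Al.vert v :: wD v f k) = [Al.vert v] ++ wD v f k from rfl, eval_app]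
      rw [h0, ← hi]
      rfl
    set g : ℕ → List (Al V E) := fun k =>
      if wD v f k ∈ N.accepts then Al.vert v :: wD v f k else wD v f k with hg
    have hglen : ∀ k, (g k).length = 5 + 5 * k ∨ (g k).length = 6 + 5 * k := by
      intro k
      by_cases hk : wD v f k ∈ N.accepts
      · right; simp [hg, if_pos hk, wD_len]; omega
      · left; simp [hg, if_neg hk, wD_len]
    apply infct g
    · intro k k' h
      have hl := congrArg List.length h
      rcases hglen k with h1 | h1 <;> rcases hglen k' with h2 | h2 <;>
        rw [h1, h2] at hl <;> omega
    · intro k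
      rw [lang_mem_symmDiff]
      by_cases hk : wD v f k ∈ N.accepts
      · right
        rw [hg]
        simp only [if_pos hk]
        exact ⟨(hsame k).2 hk, hMrej k⟩
      · left
        rw [hg]
        simp only [if_neg hk]
        exact ⟨hMW k, hk⟩
  have hKK : ∀ i j : Fin 13,
      N.evalFrom (N.eval (pre v f)) (uw i) = N.evalFrom (N.eval (pre v f)) (uw j) → i = j := by
    intro i j hij
    apply bsig_inj
    intro p
    have h1 := key (uw i ++ probe p)
    have h2 := key (uw j ++ probe p)
    rw [evF_app (MD V E), uw_ks, evF_app N, hij] at h1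
    rw [evF_app (MD V E), uw_ks, evF_app N] at h2
    have h3 := h1.trans h2.symm
    rw [mem_accept_iff, mem_accept_iff, ks_probe, ks_probe] at h3
    cases hbi : bsig i p <;> cases hbj : bsig j p <;> rw [hbi, hbj] at h3 <;> simp_all
  -- build the injection
  have hinj : Function.Injective (fun x : Fin 13 ⊕ Bool =>
      match x with
      | .inl i => N.evalFrom (N.eval (pre v f)) (uw i)
      | .inr true => N.start
      | .inr false => N.eval [Al.vert v]) := by
    intro x y h
    match x, y with
    | .inl i, .inl j => exact congrArg Sum.inl (hKK i j h)
    | .inl i, .inr true => exact absurd h (by intro h; exact hK1 i h)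
    | .inl i, .inr false => exact absurd h (by intro h; exact hK2 i h)
    | .inr true, .inl i => exact absurd h.symm (by intro h; exact hK1 i h)
    | .inr false, .inl i => exact absurd h.symm (by intro h; exact hK2 i h)
    | .inr true, .inr false => exact absurd h (by intro h; exact hK3 h)
    | .inr false, .inr true => exact absurd h.symm (by intro h; exact hK3 h)
    | .inr true, .inr true => rfl
    | .inr false, .inr false => rfl
  have hle := Fintype.card_le_of_injective _ hinj
  simp at hle
  omega

end Cone

end ErrorsLB


/-- Every DFA `N` with at most 14 states that is hyper-equivalent to `M`
(finite symmetric difference of languages) commits at least `|E|·(|V|−2)` errors. -/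
theorem errors_lower_bound
    {V : Type} [Fintype V] [LinearOrder V] (E : Finset (V × V))
    (hord : ∀ e ∈ E, e.1 < e.2)
    (hinc : ∀ v : V, ∃ e ∈ E, v = e.1 ∨ v = e.2)
    (τ : Type) [Fintype τ] (N : DFA (Al V E) τ)
    (hcard : Fintype.card τ ≤ 14)
    (hfin : (symmDiff ((MD V E).accepts : Set (List (Al V E)))
        (N.accepts : Set (List (Al V E)))).Finite) :
    ((E.card * (Fintype.card V - 2) : ℕ) : ℕ∞)
      ≤ (symmDiff ((MD V E).accepts : Set (List (Al V E)))
          (N.accepts : Set (List (Al V E)))).encard := by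
    classical
  have main : ∀ p : (V × V) × V, ∀ (h : p.1 ∈ E), p.2 ≠ p.1.1 → p.2 ≠ p.1.2 →
      ∃ w, w ∈ symmDiff ((MD V E).accepts : Set (List (Al V E)))
            (N.accepts : Set (List (Al V E))) ∧
          w.take 2 = [Al.vert p.2, Al.edge ⟨p.1, h⟩] := by
    intro p hp h1 h2
    obtain ⟨r, hr⟩ := ErrorsLB.cone_error N hcard hfin ⟨p.1, hp⟩ p.2 h1 h2
    exact ⟨_, hr, rfl⟩
  set D := symmDiff ((MD V E).accepts : Set (List (Al V E)))
      (N.accepts : Set (List (Al V E))) with hDdef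
  let T : Finset ((V × V) × V) := E.biUnion fun e =>
      (Finset.univ.filter fun v => v ≠ e.1 ∧ v ≠ e.2).image fun v => (e, v)
  have hTmem : ∀ p : (V × V) × V, p ∈ T → p.1 ∈ E ∧ p.2 ≠ p.1.1 ∧ p.2 ≠ p.1.2 := by
    intro p hp
    simp only [T, Finset.mem_biUnion, Finset.mem_image, Finset.mem_filter, Finset.mem_univ,
      true_and] at hp
    obtain ⟨e, he, v, hv, rfl⟩ := hp
    exact ⟨he, hv.1, hv.2⟩
  have hTcard : T.card = E.card * (Fintype.card V - 2) := by
    rw [Finset.card_biUnion ?disj]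
    case disj =>
      intro e he e' he' hne
      simp only [Finset.disjoint_left]
      intro p hp hp'
      simp only [Finset.mem_image, Finset.mem_filter] at hp hp'
      obtain ⟨v, -, rfl⟩ := hp
      obtain ⟨v', -, hvv⟩ := hp'
      exact hne (congrArg Prod.fst hvv).symm
    have hper : ∀ e ∈ E,
        (((Finset.univ.filter fun v => v ≠ e.1 ∧ v ≠ e.2).image fun v => (e, v)).card
          = Fintype.card V - 2) := by
      intro e he
      have hinj : Function.Injective (fun v : V => (e, v)) := by
        intro a b h
        exact congrArg Prod.snd h
      rw [Finset.card_image_of_injective _ hinj]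
      have hset : (Finset.univ.filter fun v => v ≠ e.1 ∧ v ≠ e.2)
          = ({e.1, e.2} : Finset V)ᶜ := by
        ext v
        simp [not_or]
      rw [hset, Finset.card_compl]
      have h12 : e.1 ≠ e.2 := ne_of_lt (hord e he)
      rw [Finset.card_insert_of_notMem (by simpa using h12), Finset.card_singleton]
    rw [Finset.sum_congr rfl hper, Finset.sum_const, smul_eq_mul]
  let DF := hfin.toFinset
  let F : (V × V) × V → List (Al V E) := fun p =>
    if h : p.1 ∈ E ∧ p.2 ≠ p.1.1 ∧ p.2 ≠ p.1.2 then
      Classical.choose (main p h.1 h.2.1 h.2.2) else []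
  have hF : ∀ p (h : p.1 ∈ E ∧ p.2 ≠ p.1.1 ∧ p.2 ≠ p.1.2),
      F p ∈ D ∧ (F p).take 2 = [Al.vert p.2, Al.edge ⟨p.1, h.1⟩] := by
    intro p h
    simp only [F, dif_pos h]
    exact Classical.choose_spec (main p h.1 h.2.1 h.2.2)
  have hcardle : T.card ≤ DF.card := by
    apply Finset.card_le_card_of_injOn F
    · intro p hp
      have h := hTmem p hp
      simp only [DF, Set.Finite.mem_toFinset]
      exact (Set.Finite.mem_toFinset hfin).2 (hF p h).1
    · intro p hp q hq hpq
      have h1 := (hF p (hTmem p hp)).2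
      have h2 := (hF q (hTmem q hq)).2
      rw [hpq, h2] at h1
      simp only [List.cons.injEq, Al.vert.injEq, Al.edge.injEq, Subtype.mk.injEq,
        and_true] at h1
      obtain ⟨h21, h11⟩ := h1
      exact Prod.ext h11.symm h21.symm
  have hDcard : D.encard = (DF.card : ℕ∞) := by
    rw [← Set.encard_coe_eq_coe_finsetCard DF]; exact congrArg Set.encard hfin.coe_toFinset.symm
  calc ((E.card * (Fintype.card V - 2) : ℕ) : ℕ∞) = (T.card : ℕ∞) := by rw [hTcard]
    _ ≤ (DF.card : ℕ∞) := by exact_mod_cast hcardle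
    _ = D.encard := hDcard.symm
end
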